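/- Let 0 ≤ θ ≤ 1, 0 ≤ ν < 1, and let Θ₁, Θ₂, Θ₃, T_δ be positive reals with T_tr = (Θ₁+Θ₂+Θ₃)/3. Then the sum over i = 1,2,3 of ln((1−θ)·((1−ν)·T_tr + ν·Θᵢ) + θ·T_δ) is at least 3(1−θ)(1−ν)·ln(T_tr) + (1−θ)·ν·ln(Θ₁Θ₂Θ₃) + 3θ·ln(T_δ). -/
import Mathlib

lemma log_convex3 {w₁ w₂ w₃ p₁ p₂ p₃ : ℝ} (hw₁ : 0 ≤ w₁) (hw₂ : 0 ≤ w₂)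
    (hw₃ : 0 ≤ w₃) (hp₁ : 0 < p₁) (hp₂ : 0 < p₂) (hp₃ : 0 < p₃) (hw : w₁ + w₂ + w₃ = 1) :
    w₁ * Real.log p₁ + w₂ * Real.log p₂ + w₃ * Real.log p₃ ≤
      Real.log (w₁ * p₁ + w₂ * p₂ + w₃ * p₃) := by
  have hg : (0:ℝ) < p₁ ^ w₁ * p₂ ^ w₂ * p₃ ^ w₃ := by positivity
  have h := Real.geom_mean_le_arith_mean3_weighted hw₁ hw₂ hw₃ hp₁.le hp₂.le hp₃.le hw
  calc w₁ * Real.log p₁ + w₂ * Real.log p₂ + w₃ * Real.log p₃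
      = Real.log (p₁ ^ w₁ * p₂ ^ w₂ * p₃ ^ w₃) := by
        rw [Real.log_mul (by positivity) (by positivity),
          Real.log_mul (by positivity) (by positivity),
          Real.log_rpow hp₁, Real.log_rpow hp₂, Real.log_rpow hp₃]
    _ ≤ Real.log (w₁ * p₁ + w₂ * p₂ + w₃ * p₃) := Real.log_le_log hg h

theorem log_det_lower_bound_pos_nu (θ ν T_δ : ℝ) (Θ : Fin 3 → ℝ)
    (hθ0 : 0 ≤ θ) (hθ1 : θ ≤ 1) (hν0 : 0 ≤ ν) (hν1 : ν < 1)
    (hΘ : ∀ i, 0 < Θ i) (hδ : 0 < T_δ)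
    (T_tr : ℝ) (htr : T_tr = (Θ 0 + Θ 1 + Θ 2) / 3) :
    ∑ i : Fin 3, Real.log ((1 - θ) * ((1 - ν) * T_tr + ν * Θ i) + θ * T_δ) ≥
      3 * (1 - θ) * (1 - ν) * Real.log T_tr
        + (1 - θ) * ν * Real.log (Θ 0 * Θ 1 * Θ 2) + 3 * θ * Real.log T_δ := by
  have hT : 0 < T_tr := by
    rw [htr]; have := hΘ 0; have := hΘ 1; have := hΘ 2; linarith
  have key : ∀ i : Fin 3,
      (1 - θ) * (1 - ν) * Real.log T_tr + (1 - θ) * ν * Real.log (Θ i)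
        + θ * Real.log T_δ ≤
      Real.log ((1 - θ) * ((1 - ν) * T_tr + ν * Θ i) + θ * T_δ) := by
    intro i
    have h := log_convex3 (w₁ := (1 - θ) * (1 - ν)) (w₂ := (1 - θ) * ν) (w₃ := θ)
      (by nlinarith) (by nlinarith) hθ0 hT (hΘ i) hδ (by ring)
    calc (1 - θ) * (1 - ν) * Real.log T_tr + (1 - θ) * ν * Real.log (Θ i)
          + θ * Real.log T_δ
        ≤ Real.log ((1 - θ) * (1 - ν) * T_tr + (1 - θ) * ν * Θ i + θ * T_δ) := h
      _ = Real.log ((1 - θ) * ((1 - ν) * T_tr + ν * Θ i) + θ * T_δ) := by ring_nf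
  have h0 := key 0
  have h1 := key 1
  have h2 := key 2
  have hlog : Real.log (Θ 0 * Θ 1 * Θ 2)
      = Real.log (Θ 0) + Real.log (Θ 1) + Real.log (Θ 2) := by
    rw [Real.log_mul (mul_pos (hΘ 0) (hΘ 1)).ne' (hΘ 2).ne', Real.log_mul (hΘ 0).ne' (hΘ 1).ne']
  rw [Fin.sum_univ_three, hlog]
  linarith
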